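/- With G_n = K_n^{⊗ n²} and p_n = (1 − 1/n)^{n²}, the normalized 4-cycle density t_{p_n}(C_4, G_n) converges to 1 as n → ∞, while the normalized triangle density converges to e^{−1} ≠ 1. This refutes the statement: 'if all normalized densities converge and c_{C_4} = 1 then c_{K_3} = 1'. -/

import Mathlib

open Filter

/-- The `m`-th tensor power of the complete graph `K_n`. -/
def tensorPow (n m : ℕ) : SimpleGraph (Fin m → Fin n) where
  Adj x y := x ≠ y ∧ ∀ i, x i ≠ y i
  symm := ⟨fun x y h => ⟨h.1.symm, fun i => (h.2 i).symm⟩⟩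
  loopless := ⟨fun x h => h.1 rfl⟩

/-- The number of graph homomorphisms from `F` to `G`. -/
noncomputable def homCount {α β : Type*} (F : SimpleGraph α) (G : SimpleGraph β) : ℕ :=
  Nat.card (F →g G)

open SimpleGraph in
/-- Homs into a tensor power factor coordinatewise. -/
def homTensorEquiv (n m : ℕ) (hm : m ≠ 0) {α : Type*} (F : SimpleGraph α) :
    (F →g tensorPow n m) ≃ (Fin m → (F →g (⊤ : SimpleGraph (Fin n)))) where
  toFun φ i := ⟨fun v => φ v i, fun h => And.right (φ.map_adj h) i⟩
  invFun f := ⟨fun v i => f i v, fun {u v} h =>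
    And.intro (fun he => (f ⟨0, Nat.pos_of_ne_zero hm⟩).map_adj h (congrFun he _))
     (fun i => (f i).map_adj h)⟩
  left_inv φ := rfl
  right_inv f := rfl

lemma homCount_tensorPow (n m : ℕ) (hm : m ≠ 0) {α : Type*} (F : SimpleGraph α) :
    homCount F (tensorPow n m) = homCount F (⊤ : SimpleGraph (Fin n)) ^ m := by
  rw [homCount, Nat.card_congr (homTensorEquiv n m hm F), Nat.card_fun]
  simp [homCount]

open SimpleGraph in
def topHomEmbEquiv (n : ℕ) :
    ((⊤ : SimpleGraph (Fin 3)) →g (⊤ : SimpleGraph (Fin n))) ≃ (Fin 3 ↪ Fin n) where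
  toFun f := ⟨f, fun a b h => by
    by_contra hab
    exact (top_adj _ _).mp (f.map_adj ((top_adj _ _).mpr hab)) h⟩
  invFun f := ⟨f, fun {a b} h => (top_adj _ _).mpr (fun he => ((top_adj _ _).mp h) (f.injective he))⟩
  left_inv f := rfl
  right_inv f := rfl

open SimpleGraph in
lemma homCount_K3 (n : ℕ) :
    homCount (⊤ : SimpleGraph (Fin 3)) (⊤ : SimpleGraph (Fin n)) = n * (n-1) * (n-2) := by
  rw [homCount, Nat.card_congr (topHomEmbEquiv n), Nat.card_eq_fintype_card,
    Fintype.card_embedding_eq]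
  simp [Nat.descFactorial]
  ring

open SimpleGraph in
def c4Equiv (n : ℕ) : (cycleGraph 4 →g (⊤ : SimpleGraph (Fin n))) ≃
    Σ p : Fin n × Fin n, ({x : Fin n // x ≠ p.1 ∧ x ≠ p.2} × {x : Fin n // x ≠ p.1 ∧ x ≠ p.2}) where
  toFun f := ⟨(f 0, f 2),
    ⟨f 1, fun h => (top_adj _ _).mp (f.map_adj (by decide : (cycleGraph 4).Adj 0 1)) h.symm,
          fun h => (top_adj _ _).mp (f.map_adj (by decide : (cycleGraph 4).Adj 1 2)) h⟩,
    ⟨f 3, fun h => (top_adj _ _).mp (f.map_adj (by decide : (cycleGraph 4).Adj 3 0)) h,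
          fun h => (top_adj _ _).mp (f.map_adj (by decide : (cycleGraph 4).Adj 2 3)) h.symm⟩⟩
  invFun x := ⟨![x.1.1, x.2.1.1, x.1.2, x.2.2.1], by
    intro u v h
    obtain ⟨hb1, hb2⟩ := x.2.1.2
    obtain ⟨hd1, hd2⟩ := x.2.2.2
    fin_cases u <;> fin_cases v <;>
      first
        | exact absurd h (by decide)
        | simp only [SimpleGraph.top_adj, Matrix.cons_val_zero, Matrix.cons_val_one,
            Matrix.head_cons, Matrix.cons_val_two, Matrix.tail_cons, Matrix.cons_val_three] <;>
          tauto⟩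
  left_inv f := by
    ext v
    fin_cases v <;> rfl
  right_inv x := rfl

lemma card_ne_pair (n : ℕ) (a b : Fin n) :
    Fintype.card {x : Fin n // x ≠ a ∧ x ≠ b} = if a = b then n-1 else n-2 := by
  rw [Fintype.card_subtype]
  have : Finset.filter (fun x => x ≠ a ∧ x ≠ b) Finset.univ = Finset.univ \ {a, b} := by
    ext x; simp [and_comm]
  rw [this, Finset.card_sdiff_of_subset (Finset.subset_univ _)]
  split_ifs with h
  · subst h; simp
  · rw [Finset.card_pair h]; simp

lemma sum_ite_const (n : ℕ) (X Y : ℕ) (a : Fin n) :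
    ∑ b : Fin n, (if a = b then X else Y) = X + (n-1) * Y := by
  rw [show (Finset.univ : Finset (Fin n)) = insert a (Finset.univ.erase a) by
    simp [Finset.insert_erase]]
  rw [Finset.sum_insert (Finset.notMem_erase a _), if_pos rfl,
    Finset.sum_congr rfl (fun b hb => if_neg (Finset.ne_of_mem_erase hb).symm),
    Finset.sum_const, Finset.card_erase_of_mem (Finset.mem_univ a)]
  simp [mul_comm]

open SimpleGraph in
lemma homCount_C4 (n : ℕ) :
    homCount (cycleGraph 4) (⊤ : SimpleGraph (Fin n)) = n * ((n-1)^2 + (n-1)*(n-2)^2) := by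
  rw [homCount, Nat.card_congr (c4Equiv n), Nat.card_eq_fintype_card, Fintype.card_sigma]
  have h1 : ∀ p : Fin n × Fin n,
      Fintype.card ({x : Fin n // x ≠ p.1 ∧ x ≠ p.2} × {x : Fin n // x ≠ p.1 ∧ x ≠ p.2})
        = if p.1 = p.2 then (n-1)^2 else (n-2)^2 := by
    intro p
    rw [Fintype.card_prod, card_ne_pair]
    split_ifs <;> ring
  rw [Finset.sum_congr rfl (fun p _ => h1 p), Fintype.sum_prod_type]
  rw [Finset.sum_congr rfl (fun a _ => sum_ite_const n _ _ a), Finset.sum_const]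
  simp [mul_comm]

lemma tendsto_one_add_pow_exp (a : ℕ → ℝ) (k : ℕ → ℕ) (c : ℝ)
    (ha0 : Tendsto a atTop (nhds 0)) (hane : ∀ᶠ n in atTop, a n ≠ 0)
    (hpos : ∀ᶠ n in atTop, 0 < 1 + a n)
    (hka : Tendsto (fun n => (k n : ℝ) * a n) atTop (nhds c)) :
    Tendsto (fun n => (1 + a n) ^ (k n)) atTop (nhds (Real.exp c)) := by
  have hd : HasDerivAt (fun x : ℝ => Real.log (1 + x)) 1 0 := by
    have := (Real.hasDerivAt_log (by norm_num : (1:ℝ) + 0 ≠ 0)).comp 0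
      ((hasDerivAt_id (0:ℝ)).const_add 1)
    simpa [Function.comp_def] using this
  have hslope := hasDerivAt_iff_tendsto_slope.mp hd
  have hta : Tendsto a atTop (nhdsWithin 0 {(0:ℝ)}ᶜ) := by
    rw [tendsto_nhdsWithin_iff]
    exact ⟨ha0, hane.mono fun n h => by simpa using h⟩
  have hlog : Tendsto (fun n => Real.log (1 + a n) / a n) atTop (nhds 1) := by
    have := hslope.comp hta
    refine this.congr (fun n => ?_)
    simp [slope, Function.comp, div_eq_inv_mul]
  have hprod : Tendsto (fun n => (k n : ℝ) * Real.log (1 + a n)) atTop (nhds c) := by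
    have := hka.mul hlog
    rw [mul_one] at this
    refine this.congr' ?_
    filter_upwards [hane] with n hn
    field_simp
  have := (Real.continuous_exp.tendsto c).comp hprod
  refine this.congr' ?_
  filter_upwards [hpos] with n hn
  rw [Function.comp_apply, ← Real.log_pow, Real.exp_log (pow_pos hn _)]

lemma tendsto_nat_sub_one_atTop : Tendsto (fun n : ℕ => (n:ℝ) - 1) atTop atTop := by
  simpa [sub_eq_add_neg] using
    tendsto_atTop_add_const_right atTop (-1 : ℝ) (tendsto_natCast_atTop_atTop (R := ℝ))

lemma tendsto_ratio_one : Tendsto (fun n : ℕ => (n:ℝ)/((n:ℝ)-1)) atTop (nhds 1) := by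
  have h : Tendsto (fun n : ℕ => 1 + ((n:ℝ)-1)⁻¹) atTop (nhds (1 + 0)) :=
    tendsto_const_nhds.add tendsto_nat_sub_one_atTop.inv_tendsto_atTop
  rw [add_zero] at h
  refine (h.congr' ?_ : Tendsto _ atTop (nhds (1:ℝ)))
  filter_upwards [eventually_ge_atTop 2] with n hn
  have h1 : (n:ℝ) - 1 ≠ 0 := by
    have : (2:ℝ) ≤ (n:ℝ) := by exact_mod_cast hn
    nlinarith
  field_simp
  ring

/-- With `G_n = K_n^{⊗n²}` and `p_n = (1-1/n)^{n²}`, the normalized 4-cycle density tends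
to `1` while the normalized triangle density tends to `e^{-1} ≠ 1`, refuting
"`c_{C₄} = 1` implies `c_{K₃} = 1`". -/
theorem C4_density_one_but_triangle_density_not_one :
    Tendsto (fun n : ℕ => (homCount (SimpleGraph.cycleGraph 4) (tensorPow n (n ^ 2)) : ℝ)
        / (((1 - 1 / (n : ℝ)) ^ (n ^ 2)) ^ 4 * ((n : ℝ) ^ (n ^ 2)) ^ 4))
      atTop (nhds 1) ∧
    Tendsto (fun n : ℕ => (homCount (⊤ : SimpleGraph (Fin 3)) (tensorPow n (n ^ 2)) : ℝ)
        / (((1 - 1 / (n : ℝ)) ^ (n ^ 2)) ^ 3 * ((n : ℝ) ^ (n ^ 2)) ^ 3))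
      atTop (nhds (Real.exp (-1))) ∧
    Real.exp (-1) ≠ 1 := by
  have hsub : Tendsto (fun n : ℕ => (n:ℝ) - 1) atTop atTop := tendsto_nat_sub_one_atTop
  have hratio := tendsto_ratio_one
  refine ⟨?_, ?_, ?_⟩
  · -- C4 part
    have ha0 : Tendsto (fun n : ℕ => (((n:ℝ)-1)^3)⁻¹) atTop (nhds 0) :=
      ((tendsto_pow_atTop (three_ne_zero)).comp hsub).inv_tendsto_atTop
    have hka : Tendsto (fun n : ℕ => ((n^2 : ℕ) : ℝ) * (((n:ℝ)-1)^3)⁻¹) atTop (nhds 0) := by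
      have h := (hratio.pow 2).mul hsub.inv_tendsto_atTop
      rw [mul_zero] at h
      refine h.congr' ?_
      filter_upwards [eventually_ge_atTop 2] with n hn
      have h1 : (n:ℝ) - 1 ≠ 0 := by
        have : (2:ℝ) ≤ (n:ℝ) := by exact_mod_cast hn
        nlinarith
      rw [Pi.inv_apply]
      push_cast
      field_simp
      try ring
    have hmain := tendsto_one_add_pow_exp (fun n => (((n:ℝ)-1)^3)⁻¹) (fun n => n^2) 0 ha0
      (by
        filter_upwards [eventually_ge_atTop 2] with n hn
        have h2 : (2:ℝ) ≤ (n:ℝ) := by exact_mod_cast hn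
        have h1 : (n:ℝ) - 1 ≠ 0 := by nlinarith
        exact inv_ne_zero (pow_ne_zero _ h1))
      (by
        filter_upwards [eventually_ge_atTop 2] with n hn
        have h2 : (2:ℝ) ≤ (n:ℝ) := by exact_mod_cast hn
        have h1 : (0:ℝ) < (n:ℝ) - 1 := by nlinarith
        positivity)
      hka
    rw [Real.exp_zero] at hmain
    refine hmain.congr' ?_
    filter_upwards [eventually_ge_atTop 3] with n hn
    have hx3 : (3:ℝ) ≤ (n:ℝ) := by exact_mod_cast hn
    have hx0 : (n:ℝ) ≠ 0 := by positivity
    have hx1 : (n:ℝ) - 1 ≠ 0 := by nlinarith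
    rw [homCount_tensorPow n (n^2) (pow_ne_zero 2 (by omega)), homCount_C4]
    push_cast [Nat.cast_sub (show 1 ≤ n by omega), Nat.cast_sub (show 2 ≤ n by omega)]
    rw [pow_right_comm (1 - 1/(n:ℝ)) (n^2) 4, pow_right_comm ((n:ℝ)) (n^2) 4, ← mul_pow,
      ← div_pow]
    congr 1
    field_simp
    ring
  · -- triangle part
    have ha0 : Tendsto (fun n : ℕ => -((((n:ℝ)-1)^2)⁻¹)) atTop (nhds 0) := by
      have := (((tendsto_pow_atTop (two_ne_zero)).comp hsub).inv_tendsto_atTop).neg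
      rwa [neg_zero] at this
    have hka : Tendsto (fun n : ℕ => ((n^2 : ℕ) : ℝ) * (-((((n:ℝ)-1)^2)⁻¹))) atTop
        (nhds (-1)) := by
      have h := (hratio.pow 2).neg
      rw [one_pow] at h
      refine h.congr' ?_
      filter_upwards [eventually_ge_atTop 2] with n hn
      have h1 : (n:ℝ) - 1 ≠ 0 := by
        have : (2:ℝ) ≤ (n:ℝ) := by exact_mod_cast hn
        nlinarith
      push_cast
      field_simp
      try ring
    have hmain := tendsto_one_add_pow_exp (fun n => -((((n:ℝ)-1)^2)⁻¹)) (fun n => n^2) (-1) ha0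
      (by
        filter_upwards [eventually_ge_atTop 2] with n hn
        have h2 : (2:ℝ) ≤ (n:ℝ) := by exact_mod_cast hn
        have h1 : (n:ℝ) - 1 ≠ 0 := by nlinarith
        exact neg_ne_zero.mpr (inv_ne_zero (pow_ne_zero _ h1)))
      (by
        filter_upwards [eventually_ge_atTop 3] with n hn
        have h3 : (3:ℝ) ≤ (n:ℝ) := by exact_mod_cast hn
        have hlt : (((n:ℝ)-1)^2)⁻¹ < 1 := by
          apply inv_lt_one_of_one_lt₀
          nlinarith
        linarith)
      hka
    refine hmain.congr' ?_
    filter_upwards [eventually_ge_atTop 3] with n hn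
    have hx3 : (3:ℝ) ≤ (n:ℝ) := by exact_mod_cast hn
    have hx0 : (n:ℝ) ≠ 0 := by positivity
    have hx1 : (n:ℝ) - 1 ≠ 0 := by nlinarith
    rw [homCount_tensorPow n (n^2) (pow_ne_zero 2 (by omega)), homCount_K3]
    push_cast [Nat.cast_sub (show 1 ≤ n by omega), Nat.cast_sub (show 2 ≤ n by omega)]
    rw [pow_right_comm (1 - 1/(n:ℝ)) (n^2) 3, pow_right_comm ((n:ℝ)) (n^2) 3, ← mul_pow,
      ← div_pow]
    congr 1
    field_simp
    ring
  · intro h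
    rw [Real.exp_eq_one_iff] at h
    norm_num at h
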